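/- If in a dagger kernel category every pullback functor f⁻¹ : KSub(Y) → KSub(X) has a right adjoint ∀_f, then every KSub(X) is a Boolean algebra. -/
import Mathlib


open CategoryTheory Limits

universe v u

class Dagger (C : Type u) [Category.{v} C] [HasZeroMorphisms C] where
  dag : ∀ {X Y : C}, (X ⟶ Y) → (Y ⟶ X)
  dag_dag : ∀ {X Y : C} (f : X ⟶ Y), dag (dag f) = f
  dag_comp : ∀ {X Y Z : C} (f : X ⟶ Y) (g : Y ⟶ Z), dag (f ≫ g) = dag g ≫ dag f
  dag_id : ∀ (X : C), dag (𝟙 X) = 𝟙 X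
  dag_zero : ∀ (X Y : C), dag (0 : X ⟶ Y) = 0

namespace Dagger

variable {C : Type u} [Category.{v} C] [HasZeroMorphisms C] [Dagger C]

/-- `f` is a dagger mono: `f† ∘ f = id`. -/
def DaggerMono {X Y : C} (f : X ⟶ Y) : Prop := f ≫ dag f = 𝟙 X

/-- `f` is a dagger epi: `f ∘ f† = id`. -/
def DaggerEpi {X Y : C} (f : X ⟶ Y) : Prop := dag f ≫ f = 𝟙 Y

/-- `k` is a kernel of `f`. -/
structure IsKer {K X Y : C} (f : X ⟶ Y) (k : K ⟶ X) : Prop where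
  comp_zero : k ≫ f = 0
  lift : ∀ {Z : C} (g : Z ⟶ X), g ≫ f = 0 → ∃! h : Z ⟶ K, h ≫ k = g

/-- `k` is a kernel of `f` which is moreover a dagger mono. -/
def IsDagKer {K X Y : C} (f : X ⟶ Y) (k : K ⟶ X) : Prop :=
  IsKer f k ∧ DaggerMono k

/-- `k` is a (dagger-monic) kernel of some map. -/
def KernelMap {K X : C} (k : K ⟶ X) : Prop :=
  ∃ (Y : C) (f : X ⟶ Y), IsDagKer f k

/-- order of subobjects, by factorisation -/
def SubLE {M N X : C} (m : M ⟶ X) (n : N ⟶ X) : Prop :=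
  ∃ φ : M ⟶ N, φ ≫ n = m

/-- equality of subobjects -/
def SubEq {M N X : C} (m : M ⟶ X) (n : N ⟶ X) : Prop :=
  SubLE m n ∧ SubLE n m

/-- `p` represents the orthocomplement `m^⊥ = ker(m†)` of `m`. -/
def IsOrthoOf {M P X : C} (m : M ⟶ X) (p : P ⟶ X) : Prop :=
  IsDagKer (dag m) p

/-- `w` is the meet (intersection) of the kernels `m` and `n` in `KSub(X)`. -/
def IsMeet {M N W X : C} (m : M ⟶ X) (n : N ⟶ X) (w : W ⟶ X) : Prop :=
  KernelMap w ∧ SubLE w m ∧ SubLE w n ∧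
    ∀ {K : C} (k : K ⟶ X), KernelMap k → SubLE k m → SubLE k n → SubLE k w

/-- `j` is the join `m ∨ n = (m^⊥ ∧ n^⊥)^⊥` in `KSub(X)`. -/
def IsJoin {M N J X : C} (m : M ⟶ X) (n : N ⟶ X) (j : J ⟶ X) : Prop :=
  ∃ (MP NP W : C) (mp : MP ⟶ X) (np : NP ⟶ X) (w : W ⟶ X),
    IsOrthoOf m mp ∧ IsOrthoOf n np ∧ IsMeet mp np w ∧ IsOrthoOf w j

/-- `p` represents the pullback `f⁻¹(n) = ker(coker(n) ∘ f)` of the kernel `n` along `f`. -/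
def IsInvImg {N P X Y : C} (f : X ⟶ Y) (n : N ⟶ Y) (p : P ⟶ X) : Prop :=
  ∃ (NP : C) (np : NP ⟶ Y), IsOrthoOf n np ∧ IsDagKer (f ≫ dag np) p

/-- `i` represents the image `ker(coker(f)) = ker(ker(f†)†)` of `f`. -/
def IsImg {I X Y : C} (f : X ⟶ Y) (i : I ⟶ Y) : Prop :=
  ∃ (K : C) (k : K ⟶ Y), IsDagKer (dag f) k ∧ IsDagKer (dag k) i

/-- zero-mono: `m ∘ f = 0` implies `f = 0`. -/
def ZeroMono {X Y : C} (m : X ⟶ Y) : Prop :=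
  ∀ {Z : C} (f : Z ⟶ X), f ≫ m = 0 → f = 0

/-- zero-epi: `f ∘ e = 0` implies `f = 0`. -/
def ZeroEpi {X Y : C} (e : X ⟶ Y) : Prop :=
  ∀ {Z : C} (f : Y ⟶ Z), e ≫ f = 0 → f = 0

end Dagger

/-- A dagger kernel category: a dagger category with a zero object in which
every morphism has a kernel that is a dagger mono. -/
class DagKerCat (C : Type u) [Category.{v} C] [HasZeroMorphisms C]
    [HasZeroObject C] extends Dagger C where
  hasKer : ∀ {X Y : C} (f : X ⟶ Y), ∃ (K : C) (k : K ⟶ X), Dagger.IsDagKer f k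

section Helpers

open Dagger

variable {C : Type u} [Category.{v} C] [HasZeroMorphisms C] [Dagger C]

lemma subLE_refl {M X : C} (m : M ⟶ X) : SubLE m m :=
  ⟨𝟙 M, Category.id_comp m⟩

lemma subLE_trans {A B D X : C} {a : A ⟶ X} {b : B ⟶ X} {d : D ⟶ X}
    (h1 : SubLE a b) (h2 : SubLE b d) : SubLE a d := by
  obtain ⟨φ, hφ⟩ := h1; obtain ⟨ψ, hψ⟩ := h2
  exact ⟨φ ≫ ψ, by rw [Category.assoc, hψ, hφ]⟩

lemma subLE_of_ker {K X Y Z : C} {f : X ⟶ Y} {k : K ⟶ X} (hk : IsKer f k)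
    {g : Z ⟶ X} (hg : g ≫ f = 0) : SubLE g k := by
  obtain ⟨h, hh, -⟩ := hk.lift g hg; exact ⟨h, hh⟩

lemma comp_zero_of_le {M N X Y : C} {m : M ⟶ X} {n : N ⟶ X} {f : X ⟶ Y}
    (h : SubLE m n) (hn : n ≫ f = 0) : m ≫ f = 0 := by
  obtain ⟨φ, hφ⟩ := h; rw [← hφ, Category.assoc, hn, comp_zero]

lemma comp_subLE {P S M X : C} {p : P ⟶ M} {s : S ⟶ M} (m : M ⟶ X)
    (h : SubLE p s) : SubLE (p ≫ m) (s ≫ m) := by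
  obtain ⟨φ, hφ⟩ := h; exact ⟨φ, by rw [← Category.assoc, hφ]⟩

lemma ortho_kills {M P X : C} {m : M ⟶ X} {p : P ⟶ X} (h : IsOrthoOf m p) :
    p ≫ dag m = 0 := h.1.comp_zero

lemma kills_ortho {M P X : C} {m : M ⟶ X} {p : P ⟶ X} (h : IsOrthoOf m p) :
    m ≫ dag p = 0 := by
  have h2 := congrArg dag (ortho_kills h)
  rwa [dag_comp, dag_dag, dag_zero] at h2

lemma ortho_antitone {M N MP NP X : C} {x : M ⟶ X} {y : N ⟶ X}
    {xp : MP ⟶ X} {yp : NP ⟶ X} (hxy : SubLE x y)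
    (hx : IsOrthoOf x xp) (hy : IsOrthoOf y yp) : SubLE yp xp := by
  obtain ⟨φ, hφ⟩ := hxy
  apply subLE_of_ker hx.1
  rw [← hφ, dag_comp, ← Category.assoc, ortho_kills hy, zero_comp]

lemma le_biortho {M MP MPP X : C} {x : M ⟶ X} {xp : MP ⟶ X} {xpp : MPP ⟶ X}
    (hx : IsOrthoOf x xp) (hxpp : IsOrthoOf xp xpp) : SubLE x xpp :=
  subLE_of_ker hxpp.1 (kills_ortho hx)

lemma biortho_le {M MP MPP X : C} {x : M ⟶ X} {xp : MP ⟶ X} {xpp : MPP ⟶ X}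
    (hxk : KernelMap x) (hx : IsOrthoOf x xp) (hxpp : IsOrthoOf xp xpp) :
    SubLE xpp x := by
  obtain ⟨Y, f, hf⟩ := hxk
  have h1 : dag f ≫ dag x = 0 := by
    have h2 := congrArg dag hf.1.comp_zero
    rwa [dag_comp, dag_zero] at h2
  obtain ⟨u, hu⟩ := subLE_of_ker hx.1 h1
  have hf2 : f = dag xp ≫ dag u := by
    have h3 := congrArg dag hu
    rw [dag_comp, dag_dag] at h3
    exact h3.symm
  apply subLE_of_ker hf.1
  rw [hf2, ← Category.assoc, ortho_kills hxpp, zero_comp]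

lemma dagMono_cancel {M X Z : C} {x : M ⟶ X} (hx : DaggerMono x) {a b : Z ⟶ M}
    (hab : a ≫ x = b ≫ x) : a = b := by
  have h2 : a ≫ (x ≫ dag x) = b ≫ (x ≫ dag x) := by
    rw [← Category.assoc, ← Category.assoc, hab]
  rw [show x ≫ dag x = 𝟙 M from hx, Category.comp_id, Category.comp_id] at h2
  exact h2

lemma join_upper_left {N K J X : C} {n : N ⟶ X} {k : K ⟶ X} {j : J ⟶ X}
    (hj : IsJoin n k j) : SubLE n j := by
  obtain ⟨NP, KP, W, np, kp, w, hn, hk, hw, hwj⟩ := hj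
  obtain ⟨φ, hφ⟩ := hw.2.1
  apply subLE_of_ker hwj.1
  rw [← hφ, dag_comp, ← Category.assoc, kills_ortho hn, zero_comp]

lemma join_upper_right {N K J X : C} {n : N ⟶ X} {k : K ⟶ X} {j : J ⟶ X}
    (hj : IsJoin n k j) : SubLE k j := by
  obtain ⟨NP, KP, W, np, kp, w, hn, hk, hw, hwj⟩ := hj
  obtain ⟨φ, hφ⟩ := hw.2.2.1
  apply subLE_of_ker hwj.1
  rw [← hφ, dag_comp, ← Category.assoc, kills_ortho hk, zero_comp]

lemma join_kernelMap {N K J X : C} {n : N ⟶ X} {k : K ⟶ X} {j : J ⟶ X}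
    (hj : IsJoin n k j) : KernelMap j := by
  obtain ⟨NP, KP, W, np, kp, w, hn, hk, hw, hwj⟩ := hj
  exact ⟨W, dag w, hwj⟩

end Helpers

section Helpers2

open Dagger

variable {C : Type u} [Category.{v} C] [HasZeroMorphisms C] [HasZeroObject C]
  [DagKerCat C]

lemma join_lub {N K J Z X : C} {n : N ⟶ X} {k : K ⟶ X} {j : J ⟶ X} {z : Z ⟶ X}
    (hj : IsJoin n k j) (hz : KernelMap z) (h1 : SubLE n z) (h2 : SubLE k z) :
    SubLE j z := by
  obtain ⟨NP, KP, W, np, kp, w, hn, hk, hw, hwj⟩ := hj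
  obtain ⟨ZP, zp, hzp⟩ := DagKerCat.hasKer (dag z)
  obtain ⟨ZPP, zpp, hzpp⟩ := DagKerCat.hasKer (dag zp)
  have hzpn : SubLE zp np := ortho_antitone h1 hn hzp
  have hzpk : SubLE zp kp := ortho_antitone h2 hk hzp
  have hzw : SubLE zp w := hw.2.2.2 zp ⟨_, _, hzp⟩ hzpn hzpk
  have hjz : SubLE j zpp := ortho_antitone hzw hzpp hwj
  exact subLE_trans hjz (biortho_le hz hzp hzpp)

lemma kernelMap_comp {P M X : C} {p : P ⟶ M} {m : M ⟶ X}
    (hp : KernelMap p) (hm : KernelMap m) : KernelMap (p ≫ m) := by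
  obtain ⟨Zt, t, ht⟩ := hp
  obtain ⟨Y, f, hf⟩ := hm
  obtain ⟨W, z, hz⟩ := DagKerCat.hasKer (dag (p ≫ m))
  obtain ⟨MP, mp, hmp⟩ := DagKerCat.hasKer (dag m)
  obtain ⟨PP, pp, hpp⟩ := DagKerCat.hasKer (dag p)
  have h1 : m ≫ dag m = 𝟙 M := hf.2
  have h2 : p ≫ dag p = 𝟙 P := ht.2
  have hdm : DaggerMono (p ≫ m) := by
    show (p ≫ m) ≫ dag (p ≫ m) = 𝟙 P
    rw [dag_comp, Category.assoc,
      show m ≫ dag m ≫ dag p = dag p from by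
        rw [← Category.assoc, h1, Category.id_comp], h2]
  -- mp factors through z
  obtain ⟨σ, hσ⟩ : SubLE mp z := by
    apply subLE_of_ker hz.1
    rw [dag_comp, ← Category.assoc, hmp.1.comp_zero, zero_comp]
  -- f = dag z ≫ (dag σ ≫ dag u)
  have hfm : dag f ≫ dag m = 0 := by
    have h3 := congrArg dag hf.1.comp_zero
    rwa [dag_comp, dag_zero] at h3
  obtain ⟨u, hu⟩ := subLE_of_ker hmp.1 hfm
  have hfeq : f = dag z ≫ (dag σ ≫ dag u) := by
    have h3 := congrArg dag hu
    rw [dag_comp, dag_dag] at h3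
    rw [← h3, ← hσ, dag_comp, Category.assoc]
  -- pp ≫ m factors through z
  obtain ⟨σ2, hσ2⟩ : SubLE (pp ≫ m) z := by
    apply subLE_of_ker hz.1
    rw [dag_comp, Category.assoc,
      show m ≫ dag m ≫ dag p = dag p from by
        rw [← Category.assoc, h1, Category.id_comp]]
    exact hpp.1.comp_zero
  have hppEq : dag pp = m ≫ dag z ≫ dag σ2 := by
    have h4 : pp = σ2 ≫ z ≫ dag m := by
      rw [← Category.assoc, hσ2, Category.assoc, h1, Category.comp_id]
    rw [h4, dag_comp, dag_comp, dag_dag, Category.assoc]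
  -- t = dag pp ≫ dag u2
  have htp : dag t ≫ dag p = 0 := by
    have h3 := congrArg dag ht.1.comp_zero
    rwa [dag_comp, dag_zero] at h3
  obtain ⟨u2, hu2⟩ := subLE_of_ker hpp.1 htp
  have hteq : t = dag pp ≫ dag u2 := by
    have h3 := congrArg dag hu2
    rw [dag_comp, dag_dag] at h3
    exact h3.symm
  refine ⟨W, dag z, ⟨⟨?_, ?_⟩, hdm⟩⟩
  · have h3 := congrArg dag hz.1.comp_zero
    rwa [dag_comp, dag_dag, dag_zero] at h3
  · intro Q g hg
    have hgf : g ≫ f = 0 := by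
      rw [hfeq, ← Category.assoc, hg, zero_comp]
    obtain ⟨g', hg', -⟩ := hf.1.lift g hgf
    have hgpp : g' ≫ dag pp = 0 := by
      rw [hppEq, ← Category.assoc, hg', ← Category.assoc, hg, zero_comp]
    have hgt : g' ≫ t = 0 := by
      rw [hteq, ← Category.assoc, hgpp, zero_comp]
    obtain ⟨g'', hg'', -⟩ := ht.1.lift g' hgt
    refine ⟨g'', ?_, ?_⟩
    · show g'' ≫ (p ≫ m) = g
      rw [← Category.assoc, hg'', hg']
    · intro y hy
      have hy' : y ≫ (p ≫ m) = g := hy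
      refine dagMono_cancel hdm ?_
      rw [hy', ← Category.assoc, hg'', hg']

end Helpers2

open Dagger in
/-- if every pullback functor `f⁻¹ : KSub(Y) → KSub(X)` has a
right adjoint `∀_f`, then every `KSub(X)` is a Boolean algebra, i.e. it is
distributive: `m ∧ (n ∨ k) = (m ∧ n) ∨ (m ∧ k)`. -/
theorem stmt14 {C : Type u} [Category.{v} C] [HasZeroMorphisms C] [HasZeroObject C]
    [DagKerCat C]
    (h : ∀ {X Y M : C} (f : X ⟶ Y) (m : M ⟶ X), KernelMap m →
      ∃ (N : C) (n : N ⟶ Y), KernelMap n ∧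
        ∀ {L P : C} (l : L ⟶ Y) (p : P ⟶ X), KernelMap l → IsInvImg f l p →
          (SubLE p m ↔ SubLE l n)) :
    ∀ {X M N K J A B D E : C} (m : M ⟶ X) (n : N ⟶ X) (k : K ⟶ X),
      KernelMap m → KernelMap n → KernelMap k →
      ∀ (j : J ⟶ X) (a : A ⟶ X) (b : B ⟶ X) (c : D ⟶ X) (d : E ⟶ X),
        IsJoin n k j → IsMeet m j a → IsMeet m n b → IsMeet m k c →
        IsJoin b c d → SubEq a d := by
  intro X M N K J A B D E m n k hm hn hk j a b c d hjnk hma hmb hmc hbcd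
  -- Easy direction: d ≤ a
  have hbj : SubLE b j := subLE_trans hmb.2.2.1 (join_upper_left hjnk)
  have hcj : SubLE c j := subLE_trans hmc.2.2.1 (join_upper_right hjnk)
  have hba : SubLE b a := hma.2.2.2 b hmb.1 hmb.2.1 hbj
  have hca : SubLE c a := hma.2.2.2 c hmc.1 hmc.2.1 hcj
  have hda : SubLE d a := join_lub hbcd hma.1 hba hca
  -- Hard direction: a ≤ d
  have hdk : KernelMap d := join_kernelMap hbcd
  obtain ⟨DP, dp, hdp⟩ := DagKerCat.hasKer (dag d)
  obtain ⟨DPP, dpp, hdpp⟩ := DagKerCat.hasKer (dag dp)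
  obtain ⟨S, s, hs⟩ := DagKerCat.hasKer (m ≫ dag dp)
  obtain ⟨E', e, hek, he⟩ := h m s ⟨_, _, hs⟩
  -- generic step: if x is a kernel with x ∧ m below d, then x ≤ e
  have key : ∀ {Z W : C} (x : Z ⟶ X) (w : W ⟶ X), KernelMap x → IsMeet m x w →
      SubLE w d → SubLE x e := by
    intro Z W x w hxk hmw hwd
    obtain ⟨XP, xp, hxp⟩ := DagKerCat.hasKer (dag x)
    obtain ⟨XPP, xpp, hxpp⟩ := DagKerCat.hasKer (dag xp)
    obtain ⟨PX, px, hpx⟩ := DagKerCat.hasKer (m ≫ dag xp)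
    have hinv : IsInvImg m x px := ⟨XP, xp, hxp, hpx⟩
    refine (he x px hxk hinv).1 ?_
    -- px ≫ m ≤ x
    have hpxx : SubLE (px ≫ m) x := by
      refine subLE_trans (subLE_of_ker hxpp.1 ?_) (biortho_le hxk hxp hxpp)
      rw [Category.assoc]
      exact hpx.1.comp_zero
    have hpxm : SubLE (px ≫ m) m := ⟨px, rfl⟩
    have hpxker : KernelMap (px ≫ m) := kernelMap_comp ⟨_, _, hpx⟩ hm
    have hpxw : SubLE (px ≫ m) w := hmw.2.2.2 _ hpxker hpxm hpxx
    have hpxd : SubLE (px ≫ m) d := subLE_trans hpxw hwd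
    -- hence px ≤ s
    apply subLE_of_ker hs.1
    rw [← Category.assoc]
    exact comp_zero_of_le hpxd (kills_ortho hdp)
  have hne : SubLE n e := key n b hn hmb (join_upper_left hbcd)
  have hke : SubLE k e := key k c hk hmc (join_upper_right hbcd)
  have hje : SubLE j e := join_lub hjnk hek hne hke
  have hae : SubLE a e := subLE_trans hma.2.2.1 hje
  -- now pull back a
  obtain ⟨AP, ap, hap⟩ := DagKerCat.hasKer (dag a)
  obtain ⟨PA, pa, hpa⟩ := DagKerCat.hasKer (m ≫ dag ap)
  have hinva : IsInvImg m a pa := ⟨AP, ap, hap, hpa⟩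
  have hpas : SubLE pa s := (he a pa hma.1 hinva).2 hae
  -- a ≤ pa ≫ m
  obtain ⟨φ, hφ⟩ := hma.2.1
  have hφpa : SubLE φ pa := by
    apply subLE_of_ker hpa.1
    rw [← Category.assoc, hφ]
    exact kills_ortho hap
  obtain ⟨ψ, hψ⟩ := hφpa
  have hapa : SubLE a (pa ≫ m) := ⟨ψ, by rw [← Category.assoc, hψ, hφ]⟩
  -- s ≫ m ≤ d
  have hsmd : SubLE (s ≫ m) d := by
    refine subLE_trans (subLE_of_ker hdpp.1 ?_) (biortho_le hdk hdp hdpp)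
    rw [Category.assoc]
    exact hs.1.comp_zero
  have had : SubLE a d :=
    subLE_trans hapa (subLE_trans (comp_subLE m hpas) hsmd)
  exact ⟨had, hda⟩
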